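/- arXiv:2309.08464 — 5 statements merged into one kernel-verified Lean document; each statement's English description precedes it below -/
import Mathlib

section
/- Consider the differentially private centralized averaging mechanism with Laplace noise: for d ∈ ℝⁿ the published output is x = (1/n)Σᵢ dᵢ + ξ where ξ has law Lap(0,b), b > 0; i.e. M_d = Lap((1/n)Σᵢ dᵢ, b). Let ε > 0 and μ > 0. If {M_d} preserves ε-differential privacy under μ-adjacency, then b ≥ μ/(nε), and consequently E|x − d*|² = 2b² ≥ 2μ²/(n²ε²), where d* = (1/n)Σᵢ dᵢ. -/
open MeasureTheory ProbabilityTheory Filter Matrix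
open scoped ENNReal NNReal

/-- The Laplace measure `Lap(m, b)` on `ℝ`, given by density
`x ↦ (1/(2b)) exp(−|x − m|/b)` with respect to Lebesgue measure. -/
noncomputable def laplaceMeasure (m b : ℝ) : Measure ℝ :=
  volume.withDensity fun x => ENNReal.ofReal ((1 / (2 * b)) * Real.exp (-|x - m| / b))

/-- `d` and `d'` are `μ`-adjacent: they differ in exactly one coordinate and
`‖d − d'‖₁ ≤ μ`. -/
def MuAdjacent {n : ℕ} (μ : ℝ) (d d' : Fin n → ℝ) : Prop :=
  (∃! i, d i ≠ d' i) ∧ ∑ i, |d i - d' i| ≤ μ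

/-- The family of measures `M` indexed by `d ∈ ℝⁿ` preserves `(ε,δ)`-differential
privacy under `μ`-adjacency. -/
def PreservesDP {n : ℕ} {Ω : Type*} [MeasurableSpace Ω] (μ ε δ : ℝ)
    (M : (Fin n → ℝ) → Measure Ω) : Prop :=
  ∀ d d' : Fin n → ℝ, MuAdjacent μ d d' → ∀ S : Set Ω, MeasurableSet S →
    M d S ≤ ENNReal.ofReal (Real.exp ε) * M d' S + ENNReal.ofReal δ

/-- Assumption 1: `L` is the Laplacian of an undirected connected weighted graph with
weights `w`, with `w_{ii} = 0`, `w_{ij} = w_{ji} ≥ 0`, and `∑_j w_{ij} < 1`. -/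
structure IsGraphLaplacian {n : ℕ} (L : Matrix (Fin n) (Fin n) ℝ)
    (w : Fin n → Fin n → ℝ) : Prop where
  symm : ∀ i j, w i j = w j i
  nonneg : ∀ i j, 0 ≤ w i j
  diag_zero : ∀ i, w i i = 0
  row_sum_lt_one : ∀ i, ∑ j, w i j < 1
  connected : ∀ i j : Fin n, Relation.ReflTransGen (fun a b => 0 < w a b) i j
  off_diag : ∀ i j, i ≠ j → L i j = -(w i j)
  diag : ∀ i, L i i = ∑ k, w i k

/-- Euclidean norm on `ℝⁿ` (as functions `Fin n → ℝ`). -/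
noncomputable def euclNorm {n : ℕ} (v : Fin n → ℝ) : ℝ := Real.sqrt (∑ i, v i ^ 2)

/-- The standard normal CDF `Φ`. -/
noncomputable def stdNormalCDF (s : ℝ) : ℝ :=
  (Real.sqrt (2 * Real.pi))⁻¹ * ∫ τ in Set.Iic s, Real.exp (-τ ^ 2 / 2)

/-- `κ_ε(s) = Φ(s/2 − ε/s) − e^ε Φ(−s/2 − ε/s)`. -/
noncomputable def kappaDP (ε s : ℝ) : ℝ :=
  stdNormalCDF (s / 2 - ε / s) - Real.exp ε * stdNormalCDF (-(s / 2) - ε / s)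

open Set in
/-- Right tail of the Laplace measure: for `m ≤ a`,
`Lap(m,b)(Ici a) = (1/2) exp(−(a−m)/b)`. -/
lemma lap_tail {m b a : ℝ} (hb : 0 < b) (hma : m ≤ a) :
    laplaceMeasure m b (Set.Ici a)
      = ENNReal.ofReal (1 / 2 * Real.exp (-((a - m) / b))) := by
  have hbi : (0:ℝ) < b⁻¹ := inv_pos.mpr hb
  obtain ⟨c, hc⟩ : ∃ c : ℝ, c = 1 / (2 * b) * Real.exp (m / b) := ⟨_, rfl⟩
  have hkey : ∀ x ∈ Set.Ici a, 1 / (2 * b) * Real.exp (-|x - m| / b)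
      = c * Real.exp (-(b⁻¹ * x)) := by
    intro x hx
    have hxm : (0:ℝ) ≤ x - m := by simp only [mem_Ici] at hx; linarith
    rw [abs_of_nonneg hxm, hc]
    rw [mul_assoc, ← Real.exp_add]
    congr 1
    field_simp
    ring
  have hint : IntegrableOn (fun x => 1 / (2 * b) * Real.exp (-|x - m| / b)) (Set.Ici a) := by
    have h2 : IntegrableOn (fun x => c * Real.exp (-(b⁻¹ * x))) (Set.Ici a) := by
      rw [integrableOn_Ici_iff_integrableOn_Ioi]
      exact (by simpa only [neg_mul] using (exp_neg_integrableOn_Ioi a hbi).const_mul c :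
        Integrable (fun x => c * Real.exp (-(b⁻¹ * x))) (volume.restrict (Set.Ioi a)))
    exact (integrableOn_congr_fun hkey measurableSet_Ici).mpr h2
  have hnn : 0 ≤ᵐ[volume.restrict (Set.Ici a)]
      fun x => 1 / (2 * b) * Real.exp (-|x - m| / b) :=
    Filter.Eventually.of_forall fun x => by positivity
  rw [laplaceMeasure, withDensity_apply _ measurableSet_Ici,
    ← ofReal_integral_eq_lintegral_ofReal hint hnn]
  congr 1
  rw [setIntegral_congr_fun measurableSet_Ici hkey, MeasureTheory.integral_const_mul,
    integral_Ici_eq_integral_Ioi]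
  have := integral_comp_mul_right_Ioi (fun y => Real.exp (-y)) a hbi
  simp only [smul_eq_mul, inv_inv] at this
  have h3 : (fun x => Real.exp (-(b⁻¹ * x))) = fun x => Real.exp (-(x * b⁻¹)) := by
    ext x; ring_nf
  rw [h3, this, integral_exp_neg_Ioi]
  rw [hc]
  have hbne : b ≠ 0 := hb.ne'
  have he : -((a - m) / b) = m / b + -(a * b⁻¹) := by field_simp; ring
  rw [he, Real.exp_add]
  field_simp

open Set in
/-- Second moment of the Laplace measure about its mean: `E|x − m|² = 2b²`. -/
lemma lap_var (m b : ℝ) (hb : 0 < b) :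
    ∫ x : ℝ, |x - m| ^ 2 ∂(laplaceMeasure m b) = 2 * b ^ 2 := by
  have hbne : b ≠ 0 := hb.ne'
  have hmeas : Measurable fun x : ℝ =>
      (1 / (2 * b) * Real.exp (-|x - m| / b)).toNNReal := by
    apply Measurable.real_toNNReal
    fun_prop
  have h0 : laplaceMeasure m b
      = volume.withDensity fun x =>
        ((1 / (2 * b) * Real.exp (-|x - m| / b)).toNNReal : ℝ≥0∞) := rfl
  rw [h0, integral_withDensity_eq_integral_smul hmeas]
  have h1 : (fun x : ℝ => (1 / (2 * b) * Real.exp (-|x - m| / b)).toNNReal • |x - m| ^ 2)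
      = fun x => (fun t : ℝ => 1 / (2 * b) * Real.exp (-|t| / b) * t ^ 2) (x - m) := by
    funext x
    have hnn : (0:ℝ) ≤ 1 / (2 * b) * Real.exp (-|x - m| / b) := by positivity
    rw [NNReal.smul_def, Real.coe_toNNReal _ hnn, sq_abs]
    simp [smul_eq_mul]
  rw [h1, integral_sub_right_eq_self (fun t : ℝ => 1 / (2 * b) * Real.exp (-|t| / b) * t ^ 2) m]
  have h2 : (fun t : ℝ => 1 / (2 * b) * Real.exp (-|t| / b) * t ^ 2)
      = fun t => (fun s : ℝ => 1 / (2 * b) * Real.exp (-s / b) * s ^ 2) |t| := by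
    funext t
    simp [sq_abs]
  rw [h2, integral_comp_abs (f := fun s : ℝ => 1 / (2 * b) * Real.exp (-s / b) * s ^ 2)]
  have h3 : ∀ s ∈ Set.Ioi (0:ℝ), 1 / (2 * b) * Real.exp (-s / b) * s ^ 2
      = 1 / (2 * b) * (s ^ ((3:ℝ) - 1) * Real.exp (-(b⁻¹ * s))) := by
    intro s hs
    have hs' : (0:ℝ) < s := hs
    have : s ^ ((3:ℝ) - 1) = s ^ 2 := by
      rw [show (3:ℝ) - 1 = ((2:ℕ):ℝ) by norm_num, Real.rpow_natCast]
    rw [this]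
    have : -s / b = -(b⁻¹ * s) := by field_simp
    rw [this]
    ring
  rw [setIntegral_congr_fun measurableSet_Ioi h3, MeasureTheory.integral_const_mul,
    Real.integral_rpow_mul_exp_neg_mul_Ioi (by norm_num : (0:ℝ) < 3) (inv_pos.mpr hb)]
  have hg : Real.Gamma 3 = 2 := by
    rw [show (3:ℝ) = (2:ℕ) + 1 by norm_num, Real.Gamma_nat_eq_factorial]
    norm_num
  rw [hg]
  rw [show (1 / b⁻¹ : ℝ) = b by simp]
  rw [show (b : ℝ) ^ (3:ℝ) = b ^ (3:ℕ) by
    rw [show (3:ℝ) = ((3:ℕ):ℝ) by norm_num, Real.rpow_natCast]]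
  field_simp

/-- trade-off of the DPCA algorithm under the Laplace mechanism. -/
theorem dpca_laplace_tradeoff {n : ℕ} (hn : 0 < n)
    (b ε μ : ℝ) (hb : 0 < b) (hε : 0 < ε) (hμ : 0 < μ)
    (hDP : PreservesDP μ ε 0
      (fun d : Fin n → ℝ => laplaceMeasure ((∑ i, d i) / (n : ℝ)) b)) :
    b ≥ μ / ((n : ℝ) * ε) ∧
    ∀ d : Fin n → ℝ,
      (∫ x : ℝ, |x - (∑ i, d i) / (n : ℝ)| ^ 2
          ∂(laplaceMeasure ((∑ i, d i) / (n : ℝ)) b)) = 2 * b ^ 2 ∧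
      2 * b ^ 2 ≥ 2 * μ ^ 2 / ((n : ℝ) ^ 2 * ε ^ 2) := by
  have hn' : (0:ℝ) < n := Nat.cast_pos.mpr hn
  have hge : b ≥ μ / ((n : ℝ) * ε) := by
    set i0 : Fin n := ⟨0, hn⟩
    set d : Fin n → ℝ := fun i => if i = i0 then μ else 0 with hd
    have hsum : ∑ i, d i = μ := by simp [hd]
    have hadj : MuAdjacent μ d 0 := by
      constructor
      · refine ⟨i0, by simp [hd, hμ.ne'], fun j hj => ?_⟩
        by_contra hne
        simp [hd, hne] at hj
      · have : ∀ i, |d i - (0 : (Fin n → ℝ)) i| = if i = i0 then μ else 0 := by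
          intro i
          by_cases h : i = i0 <;> simp [hd, h, abs_of_pos hμ]
        rw [Finset.sum_congr rfl fun i _ => this i]
        simp
    have h0sum : ∑ i, (0 : Fin n → ℝ) i = 0 := by simp
    have key := hDP d 0 hadj (Set.Ici (μ / n)) measurableSet_Ici
    simp only [hsum, h0sum, zero_div] at key
    have hml : (0:ℝ) ≤ μ / n := by positivity
    rw [lap_tail hb le_rfl, lap_tail hb hml] at key
    rw [ENNReal.ofReal_zero, add_zero,
      ← ENNReal.ofReal_mul (Real.exp_pos ε).le] at key
    have hkey : (1:ℝ) / 2 * Real.exp (-((μ / n - μ / n) / b))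
        ≤ Real.exp ε * (1 / 2 * Real.exp (-((μ / n - 0) / b))) :=
      (ENNReal.ofReal_le_ofReal_iff (by positivity)).mp key
    simp only [sub_self, zero_div, neg_zero, Real.exp_zero, mul_one, sub_zero] at hkey
    have hea : Real.exp (ε + -(μ / n / b)) = Real.exp ε * Real.exp (-(μ / n / b)) :=
      Real.exp_add _ _
    have h1 : (1:ℝ) ≤ Real.exp (ε + -(μ / n / b)) := by rw [hea]; nlinarith
    have h2 : (0:ℝ) ≤ ε + -(μ / n / b) := by
      by_contra h
      push_neg at h
      have := Real.exp_lt_exp.mpr h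
      rw [Real.exp_zero] at this
      linarith
    have h3 : μ / n / b ≤ ε := by linarith
    rw [div_div] at h3
    rw [ge_iff_le, div_le_iff₀ (by positivity)]
    calc μ ≤ ε * (n * b) := (div_le_iff₀ (by positivity)).mp h3
      _ = b * (n * ε) := by ring
  refine ⟨hge, fun d => ⟨lap_var _ b hb, ?_⟩⟩
  have hμb : μ ≤ b * ((n : ℝ) * ε) := (div_le_iff₀ (by positivity)).mp hge
  rw [ge_iff_le, div_le_iff₀ (by positivity)]
  nlinarith [sq_nonneg (b * ((n:ℝ) * ε) - μ), hμ.le, mul_pos hn' hε]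
end

section
/- Consider the differentially private centralized averaging mechanism with Gaussian noise: for d ∈ ℝⁿ the published output is x = (1/n)Σᵢ dᵢ + ξ where ξ has law N(0,σ²), σ > 0; i.e. M_d is the Gaussian measure with mean (1/n)Σᵢ dᵢ and variance σ². Let ε ≥ 0, δ ∈ (0,1), μ > 0. If {M_d} preserves (ε,δ)-differential privacy under μ-adjacency, then κ_ε(μ/(nσ)) ≤ δ; consequently, for the unique c > 0 with κ_ε(c) = δ, one has σ ≥ μ/(nc) and E|x − d*|² = σ² ≥ μ²/(n²c²), where d* = (1/n)Σᵢ dᵢ. -/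
open MeasureTheory ProbabilityTheory Filter Matrix

section Aux
open Real


lemma integrable_sq_exp {b : ℝ} (hb : 0 < b) :
    Integrable (fun x : ℝ => x ^ 2 * Real.exp (-b * x ^ 2)) := by
  have := integrable_rpow_mul_exp_neg_mul_sq hb (s := 2) (by norm_num)
  have h2 : ∀ x : ℝ, x ^ (2:ℝ) = x ^ 2 := fun x => Real.rpow_natCast x 2
  simp only [h2] at this
  exact this

lemma integral_sq_exp {b : ℝ} (hb : 0 < b) :
    ∫ x : ℝ, x ^ 2 * Real.exp (-b * x ^ 2) = Real.sqrt (π / b) / (2 * b) := by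
  have hb' : (2 * b) ≠ 0 := by positivity
  have hu : ∀ x : ℝ, HasDerivAt (fun x : ℝ => x) 1 x := fun x => hasDerivAt_id x
  have hv : ∀ x : ℝ, HasDerivAt (fun x : ℝ => -Real.exp (-b * x ^ 2) / (2 * b))
      (x * Real.exp (-b * x ^ 2)) x := by
    intro x
    have h1 : HasDerivAt (fun x : ℝ => -b * x ^ 2) (-b * (2 * x)) x := by
      simpa using ((hasDerivAt_pow 2 x).const_mul (-b))
    have h2 := (h1.exp).neg.div_const (2 * b)
    refine h2.congr_deriv (Eq.symm ?_)
    field_simp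
  have hi1 : Integrable ((fun x : ℝ => x) * (fun x : ℝ => x * Real.exp (-b * x ^ 2))) := by
    have := integrable_sq_exp hb
    refine this.congr ?_
    filter_upwards with x
    simp [Pi.mul_apply]; ring
  have hi2 : Integrable ((fun _ : ℝ => (1:ℝ)) * (fun x : ℝ => -Real.exp (-b * x ^ 2) / (2 * b))) := by
    have := ((integrable_exp_neg_mul_sq hb).neg.div_const (2 * b))
    refine this.congr ?_
    filter_upwards with x
    simp [Pi.mul_apply]
  have hi3 : Integrable ((fun x : ℝ => x) * (fun x : ℝ => -Real.exp (-b * x ^ 2) / (2 * b))) := by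
    have := ((integrable_mul_exp_neg_mul_sq hb).neg.div_const (2 * b))
    refine this.congr ?_
    filter_upwards with x
    simp [Pi.mul_apply]
    ring
  have key := integral_mul_deriv_eq_deriv_mul_of_integrable (fun x _ => hu x) (fun x _ => hv x) hi1 hi2 hi3
  have : ∫ x : ℝ, x * (x * Real.exp (-b * x ^ 2)) = ∫ x : ℝ, x ^ 2 * Real.exp (-b * x ^ 2) := by
    congr 1; funext x; ring
  rw [this] at key
  rw [key]
  have : ∫ x : ℝ, (1:ℝ) * (-Real.exp (-b * x ^ 2) / (2 * b))
      = -(∫ x : ℝ, Real.exp (-b * x ^ 2)) / (2 * b) := by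
    simp [integral_div, integral_neg]
  rw [this, integral_gaussian]
  field_simp



lemma gauss_var (m σ : ℝ) (hσ : 0 < σ) :
    ∫ x : ℝ, |x - m| ^ 2 ∂(gaussianReal m ⟨σ ^ 2, sq_nonneg σ⟩) = σ ^ 2 := by
  have hv : (⟨σ ^ 2, sq_nonneg σ⟩ : NNReal) ≠ 0 := by
    intro h
    have hpos : (0:ℝ) < σ ^ 2 := by positivity
    exact hpos.ne' (congrArg NNReal.toReal h)
  rw [gaussianReal_of_var_ne_zero _ hv]
  have hpdf : gaussianPDF m ⟨σ ^ 2, sq_nonneg σ⟩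
      = fun x => ((gaussianPDFReal m ⟨σ ^ 2, sq_nonneg σ⟩ x).toNNReal : ENNReal) := rfl
  erw [hpdf, integral_withDensity_eq_integral_smul
    ((measurable_gaussianPDFReal _ _).real_toNNReal)]
  have h1 : ∀ x : ℝ, (gaussianPDFReal m ⟨σ ^ 2, sq_nonneg σ⟩ x).toNNReal • |x - m| ^ 2
      = gaussianPDFReal m ⟨σ ^ 2, sq_nonneg σ⟩ x * (x - m) ^ 2 := by
    intro x
    rw [NNReal.smul_def]
    erw [Real.coe_toNNReal _ (gaussianPDFReal_nonneg _ _ _)]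
    rw [smul_eq_mul, sq_abs]
  simp only [h1]
  have h2 : ∀ x : ℝ, gaussianPDFReal m ⟨σ ^ 2, sq_nonneg σ⟩ x * (x - m) ^ 2
      = (fun y => (Real.sqrt (2 * π * σ ^ 2))⁻¹ * Real.exp (-(2 * σ ^ 2)⁻¹ * y ^ 2) * y ^ 2) (x - m) := by
    intro x
    simp only [gaussianPDFReal]
    erw [NNReal.coe_mk]
    ring
  simp only [h2]
  rw [integral_sub_right_eq_self (fun y => (Real.sqrt (2 * π * σ ^ 2))⁻¹ * Real.exp (-(2 * σ ^ 2)⁻¹ * y ^ 2) * y ^ 2) m]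
  have hb : (0:ℝ) < (2 * σ ^ 2)⁻¹ := by positivity
  have : ∫ y : ℝ, (Real.sqrt (2 * π * σ ^ 2))⁻¹ * Real.exp (-(2 * σ ^ 2)⁻¹ * y ^ 2) * y ^ 2
      = (Real.sqrt (2 * π * σ ^ 2))⁻¹ * ∫ y : ℝ, y ^ 2 * Real.exp (-(2 * σ ^ 2)⁻¹ * y ^ 2) := by
    rw [← integral_const_mul]
    congr 1; funext y; ring
  rw [this, integral_sq_exp hb]
  rw [show π / (2 * σ ^ 2)⁻¹ = 2 * π * σ ^ 2 by field_simp]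
  rw [show (2 * (2 * σ ^ 2)⁻¹) = (σ ^ 2)⁻¹ by field_simp]
  have hs : Real.sqrt (2 * π * σ ^ 2) ≠ 0 := by
    refine ne_of_gt (Real.sqrt_pos.mpr ?_)
    positivity
  field_simp




lemma integrable_std : Integrable (fun τ : ℝ => Real.exp (-τ ^ 2 / 2)) := by
  have := integrable_exp_neg_mul_sq (b := (1:ℝ)/2) (by norm_num)
  refine this.congr ?_
  filter_upwards with x
  congr 1
  ring

lemma hasDerivAt_stdNormalCDF (x : ℝ) :
    HasDerivAt stdNormalCDF ((Real.sqrt (2 * π))⁻¹ * Real.exp (-x ^ 2 / 2)) x := by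
  have hF : ∀ s : ℝ, (∫ τ in Set.Iic s, Real.exp (-τ ^ 2 / 2))
      = (∫ τ in Set.Iic 0, Real.exp (-τ ^ 2 / 2)) + ∫ τ in (0:ℝ)..s, Real.exp (-τ ^ 2 / 2) := by
    intro s
    have h := intervalIntegral.integral_Iic_sub_Iic (μ := volume)
      integrable_std.integrableOn integrable_std.integrableOn (a := 0) (b := s)
    linarith
  have hcont : Continuous (fun τ : ℝ => Real.exp (-τ ^ 2 / 2)) := by continuity
  have hd : HasDerivAt (fun s => ∫ τ in (0:ℝ)..s, Real.exp (-τ ^ 2 / 2))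
      (Real.exp (-x ^ 2 / 2)) x :=
    intervalIntegral.integral_hasDerivAt_right integrable_std.intervalIntegrable
      (hcont.stronglyMeasurable.stronglyMeasurableAtFilter) hcont.continuousAt
  have : HasDerivAt (fun s => (Real.sqrt (2 * π))⁻¹ *
      ((∫ τ in Set.Iic 0, Real.exp (-τ ^ 2 / 2)) + ∫ τ in (0:ℝ)..s, Real.exp (-τ ^ 2 / 2)))
      ((Real.sqrt (2 * π))⁻¹ * Real.exp (-x ^ 2 / 2)) x := (hd.const_add _).const_mul _
  refine this.congr_of_eventuallyEq ?_
  filter_upwards with s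
  unfold stdNormalCDF
  rw [hF s]

lemma kappa_hasDerivAt {ε s : ℝ} (hs : 0 < s) :
    HasDerivAt (kappaDP ε)
      ((Real.sqrt (2 * π))⁻¹ * Real.exp (-(s / 2 - ε / s) ^ 2 / 2)) s := by
  have hs' : s ≠ 0 := ne_of_gt hs
  have hg : HasDerivAt (fun u : ℝ => u / 2 - ε / u) (1 / 2 + ε / s ^ 2) s := by
    have h1 : HasDerivAt (fun u : ℝ => u / 2) (1 / 2) s := (hasDerivAt_id s).div_const 2
    have h2 : HasDerivAt (fun u : ℝ => ε / u) (-ε / s ^ 2) s := by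
      have := (hasDerivAt_inv hs').const_mul ε
      refine this.congr_deriv (Eq.symm ?_)
      field_simp
    refine (h1.sub h2).congr_deriv (Eq.symm ?_)
    ring
  have hh : HasDerivAt (fun u : ℝ => -(u / 2) - ε / u) (-(1 / 2) + ε / s ^ 2) s := by
    have h1 : HasDerivAt (fun u : ℝ => -(u / 2)) (-(1 / 2)) s :=
      ((hasDerivAt_id s).div_const 2).neg
    have h2 : HasDerivAt (fun u : ℝ => ε / u) (-ε / s ^ 2) s := by
      have := (hasDerivAt_inv hs').const_mul ε
      refine this.congr_deriv (Eq.symm ?_)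
      field_simp
    refine (h1.sub h2).congr_deriv (Eq.symm ?_)
    ring
  have hA := (hasDerivAt_stdNormalCDF (s / 2 - ε / s)).comp s hg
  have hB := ((hasDerivAt_stdNormalCDF (-(s / 2) - ε / s)).comp s hh).const_mul (Real.exp ε)
  have key := hA.sub hB
  have hexp : Real.exp ε * Real.exp (-(-(s / 2) - ε / s) ^ 2 / 2)
      = Real.exp (-(s / 2 - ε / s) ^ 2 / 2) := by
    rw [← Real.exp_add]
    congr 1
    field_simp
    ring
  refine key.congr_deriv (Eq.symm ?_)
  have hcalc : (1 / 2 + ε / s ^ 2) - (-(1 / 2) + ε / s ^ 2) = 1 := by ring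
  calc (Real.sqrt (2 * π))⁻¹ * Real.exp (-(s / 2 - ε / s) ^ 2 / 2)
      = (Real.sqrt (2 * π))⁻¹ * Real.exp (-(s / 2 - ε / s) ^ 2 / 2) * (1 / 2 + ε / s ^ 2)
        - Real.exp ε * ((Real.sqrt (2 * π))⁻¹ * Real.exp (-(-(s / 2) - ε / s) ^ 2 / 2)
            * (-(1 / 2) + ε / s ^ 2)) := by
        rw [show Real.exp ε * ((Real.sqrt (2 * π))⁻¹ * Real.exp (-(-(s / 2) - ε / s) ^ 2 / 2)
            * (-(1 / 2) + ε / s ^ 2)) = (Real.sqrt (2 * π))⁻¹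
              * (Real.exp ε * Real.exp (-(-(s / 2) - ε / s) ^ 2 / 2)) * (-(1 / 2) + ε / s ^ 2) by
            ring, hexp]
        ring
    _ = _ := by ring

lemma kappa_strictMonoOn (ε : ℝ) : StrictMonoOn (kappaDP ε) (Set.Ioi (0:ℝ)) := by
  refine strictMonoOn_of_deriv_pos (convex_Ioi 0) ?_ ?_
  · intro x hx
    exact ((kappa_hasDerivAt (Set.mem_Ioi.mp hx)).continuousAt).continuousWithinAt
  · intro x hx
    rw [interior_Ioi] at hx
    rw [(kappa_hasDerivAt (Set.mem_Ioi.mp hx)).deriv]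
    positivity



lemma stdNormalCDF_nonneg (s : ℝ) : 0 ≤ stdNormalCDF s := by
  unfold stdNormalCDF
  have h1 : (0:ℝ) ≤ (Real.sqrt (2 * π))⁻¹ := by positivity
  refine mul_nonneg h1 (integral_nonneg fun x => (Real.exp_pos _).le)

lemma gauss01_Iic (s : ℝ) :
    gaussianReal 0 1 (Set.Iic s) = ENNReal.ofReal (stdNormalCDF s) := by
  rw [gaussianReal_apply_eq_integral 0 one_ne_zero (Set.Iic s)]
  congr 1
  unfold stdNormalCDF
  rw [← integral_const_mul]
  refine setIntegral_congr_fun measurableSet_Iic fun x _ => ?_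
  simp only [gaussianPDFReal, NNReal.coe_one, mul_one, sub_zero]

lemma gauss01_Ici (s : ℝ) :
    gaussianReal 0 1 (Set.Ici s) = ENNReal.ofReal (stdNormalCDF (-s)) := by
  have hmap : (gaussianReal 0 1).map (fun x => (-1 : ℝ) * x) = gaussianReal 0 1 := by
    rw [gaussianReal_map_const_mul (-1 : ℝ)]
    norm_num
  have : gaussianReal 0 1 (Set.Ici s) = (gaussianReal 0 1).map (fun x => (-1:ℝ) * x) (Set.Ici s) := by
    rw [hmap]
  rw [this, Measure.map_apply (by fun_prop) measurableSet_Ici]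
  have hpre : (fun x => (-1:ℝ) * x) ⁻¹' Set.Ici s = Set.Iic (-s) := by
    ext x
    simp only [Set.mem_preimage, Set.mem_Ici, Set.mem_Iic, neg_one_mul]
    constructor <;> intro h <;> linarith
  rw [hpre, gauss01_Iic]

lemma gauss_eq_map (m σ : ℝ) (hσ : 0 < σ) :
    gaussianReal m ⟨σ ^ 2, sq_nonneg σ⟩ = (gaussianReal 0 1).map (fun x => σ * x + m) := by
  have h1 : (gaussianReal 0 1).map (fun x => σ * x) = gaussianReal 0 ⟨σ ^ 2, sq_nonneg σ⟩ := by
    rw [show (fun x : ℝ => σ * x) = (σ * ·) from rfl, gaussianReal_map_const_mul σ]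
    norm_num
    rfl
  have h2 : ((gaussianReal 0 ⟨σ ^ 2, sq_nonneg σ⟩).map (fun x => x + m))
      = gaussianReal m ⟨σ ^ 2, sq_nonneg σ⟩ := by
    rw [show (fun x : ℝ => x + m) = (· + m) from rfl]
    erw [gaussianReal_map_add_const m]
    norm_num
  rw [← h2, ← h1, Measure.map_map (by fun_prop) (by fun_prop)]
  rfl

lemma gauss_Ici (m σ t : ℝ) (hσ : 0 < σ) :
    gaussianReal m ⟨σ ^ 2, sq_nonneg σ⟩ (Set.Ici t)
      = ENNReal.ofReal (stdNormalCDF ((m - t) / σ)) := by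
  rw [gauss_eq_map m σ hσ, Measure.map_apply (by fun_prop) measurableSet_Ici]
  have hpre : (fun x => σ * x + m) ⁻¹' Set.Ici t = Set.Ici ((t - m) / σ) := by
    ext x
    simp only [Set.mem_preimage, Set.mem_Ici]
    rw [div_le_iff₀ hσ]
    constructor <;> intro h <;> nlinarith
  rw [hpre, gauss01_Ici]
  congr 2
  field_simp
  ring

end Aux

/-- trade-off of the DPCA algorithm under the Gaussian mechanism. -/
theorem dpca_gaussian_tradeoff {n : ℕ} (hn : 0 < n)
    (σ ε δ μ : ℝ) (hσ : 0 < σ) (hε : 0 ≤ ε) (hδ : δ ∈ Set.Ioo (0 : ℝ) 1) (hμ : 0 < μ)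
    (hDP : PreservesDP μ ε δ
      (fun d : Fin n → ℝ => gaussianReal ((∑ i, d i) / (n : ℝ)) ⟨σ ^ 2, sq_nonneg σ⟩)) :
    kappaDP ε (μ / ((n : ℝ) * σ)) ≤ δ ∧
    ∀ c : ℝ, 0 < c → kappaDP ε c = δ →
      σ ≥ μ / ((n : ℝ) * c) ∧
      ∀ d : Fin n → ℝ,
        (∫ x : ℝ, |x - (∑ i, d i) / (n : ℝ)| ^ 2
            ∂(gaussianReal ((∑ i, d i) / (n : ℝ)) ⟨σ ^ 2, sq_nonneg σ⟩)) = σ ^ 2 ∧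
        σ ^ 2 ≥ μ ^ 2 / ((n : ℝ) ^ 2 * c ^ 2) := by
  obtain ⟨hδ0, hδ1⟩ := hδ
  have hn' : (0:ℝ) < n := Nat.cast_pos.mpr hn
  set a : ℝ := μ / n with ha_def
  have ha : 0 < a := div_pos hμ hn'
  set s : ℝ := μ / ((n:ℝ) * σ) with hs_def
  have hs : 0 < s := div_pos hμ (by positivity)
  have hsa : s = a / σ := by rw [hs_def, ha_def]; field_simp
  have hkey : kappaDP ε s ≤ δ := by
    set t : ℝ := a / 2 + ε * σ ^ 2 / a with ht_def
    set i0 : Fin n := ⟨0, hn⟩ with hi0_def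
    set d : Fin n → ℝ := fun _ => 0 with hd_def
    set d' : Fin n → ℝ := fun j => if j = i0 then μ else 0 with hd'_def
    have hsum_d : (∑ i, d i) = 0 := by simp [hd_def]
    have hsum_d' : (∑ i, d' i) = μ := by simp [hd'_def]
    have hadj : MuAdjacent μ d' d := by
      constructor
      · refine ⟨i0, ?_, ?_⟩
        · simp only [hd'_def, hd_def, if_pos rfl]
          exact ne_of_gt hμ
        · intro j hj
          by_contra hji
          simp [hd'_def, hd_def, hji] at hj
      · have habs : ∀ j, |(if j = i0 then μ else 0 : ℝ)| = if j = i0 then μ else 0 := by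
          intro j; split <;> simp [abs_of_nonneg hμ.le]
        have : ∑ i, |d' i - d i| = μ := by
          simp only [hd'_def, hd_def, sub_zero, habs, Finset.sum_ite_eq' Finset.univ i0,
            Finset.mem_univ, if_true]
        linarith [this.le]
    have hDP' := hDP d' d hadj (Set.Ici t) measurableSet_Ici
    dsimp only at hDP'
    rw [hsum_d, hsum_d', zero_div, gauss_Ici _ _ _ hσ, gauss_Ici _ _ _ hσ] at hDP'
    have hΦ := stdNormalCDF_nonneg ((0 - t)/σ)
    rw [← ENNReal.ofReal_mul (Real.exp_pos ε).le,
      ← ENNReal.ofReal_add (mul_nonneg (Real.exp_pos ε).le hΦ) hδ0.le] at hDP'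
    have hreal := (ENNReal.ofReal_le_ofReal_iff
      (add_nonneg (mul_nonneg (Real.exp_pos ε).le hΦ) hδ0.le)).mp hDP'
    have h1 : (a - t) / σ = s / 2 - ε / s := by
      rw [ht_def, hsa]; field_simp; ring
    have h2 : (0 - t) / σ = -(s / 2) - ε / s := by
      rw [ht_def, hsa]; field_simp; ring
    unfold kappaDP
    rw [← h1, ← h2]
    linarith [hreal]
  refine ⟨?_, fun c hc hkc => ?_⟩
  · rw [hs_def] at hkey
    exact hkey
  have hσc : σ ≥ μ / ((n:ℝ) * c) := by
    by_contra h
    push_neg at h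
    have hcs : c < s := by
      rw [hs_def]
      rw [lt_div_iff₀ (by positivity)] at h
      rw [lt_div_iff₀ (by positivity)]
      nlinarith
    have hlt := kappa_strictMonoOn ε (Set.mem_Ioi.mpr hc) (Set.mem_Ioi.mpr hs) hcs
    rw [hkc] at hlt
    linarith [hkey]
  refine ⟨hσc, fun d => ⟨gauss_var _ σ hσ, ?_⟩⟩
  have hpos : 0 < μ / ((n:ℝ) * c) := div_pos hμ (by positivity)
  have hsq := pow_le_pow_left₀ hpos.le hσc 2
  calc μ ^ 2 / ((n:ℝ) ^ 2 * c ^ 2) = (μ / ((n:ℝ) * c)) ^ 2 := by rw [div_pow, mul_pow]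
    _ ≤ σ ^ 2 := hsq
end

section
/- Let G be an undirected connected graph on n ≥ 2 vertices, let ā ≥ 1, and for each edge (i,j) let a_{i→j} and a_{j→i} be positive integers in the interval [ā/√2, ā]. With ζ = 1/(nā² + 1), define A ∈ ℝ^{n×n} by [A]_{ij} = −ζ a_{i→j} a_{j→i} for edges (i,j), [A]_{ij} = 0 for non-adjacent i ≠ j, and [A]_{ii} = Σ_{j ∈ N_i} ζ a_{i→j} a_{j→i}. Then: (a) A is symmetric and positive semidefinite with A1ₙ = 0; (b) [A]_{ii} ≤ (n−1)ā²/(nā²+1) and |[A]_{ij}| ≤ ā²/(nā²+1) for all i ≠ j; (c) all eigenvalues of A lie in [0, 2); (d) P := I − A is symmetric and doubly stochastic, and [P]_{ij} ≥ 1/(2(n + ā^{−2})) for every j ∈ N_i ∪ {i}. -/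
open MeasureTheory ProbabilityTheory Filter Matrix

/-- properties of the noise-mixing matrix `A` and of `P = I − A`
constructed from the DiShuf mechanism with `ā`-bounded integer coefficients. -/
theorem dishuf_matrix_properties {n : ℕ} (hn : 2 ≤ n)
    (G : SimpleGraph (Fin n)) [DecidableRel G.Adj] (hGconn : G.Connected)
    (abar : ℝ) (habar : 1 ≤ abar) (a : Fin n → Fin n → ℕ)
    (ha_pos : ∀ i j, G.Adj i j → 0 < a i j)
    (ha_lb : ∀ i j, G.Adj i j → abar / Real.sqrt 2 ≤ (a i j : ℝ))
    (ha_ub : ∀ i j, G.Adj i j → (a i j : ℝ) ≤ abar)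
    (ζ : ℝ) (hζ : ζ = 1 / ((n : ℝ) * abar ^ 2 + 1))
    (A : Matrix (Fin n) (Fin n) ℝ)
    (hA_adj : ∀ i j, G.Adj i j → A i j = -(ζ * (a i j : ℝ) * (a j i : ℝ)))
    (hA_nonadj : ∀ i j, i ≠ j → ¬G.Adj i j → A i j = 0)
    (hA_diag : ∀ i, A i i = ∑ j, if G.Adj i j then ζ * (a i j : ℝ) * (a j i : ℝ) else 0) :
    (A.IsSymm ∧ A.PosSemidef ∧ A.mulVec (fun _ => 1) = 0) ∧
    ((∀ i, A i i ≤ ((n : ℝ) - 1) * abar ^ 2 / ((n : ℝ) * abar ^ 2 + 1)) ∧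
      (∀ i j, i ≠ j → |A i j| ≤ abar ^ 2 / ((n : ℝ) * abar ^ 2 + 1))) ∧
    (∀ (c : ℝ) (v : Fin n → ℝ), v ≠ 0 → A.mulVec v = c • v → 0 ≤ c ∧ c < 2) ∧
    (((1 - A).IsSymm ∧
        (∀ i j, 0 ≤ (1 - A) i j) ∧
        (∀ i, ∑ j, (1 - A) i j = 1) ∧
        (∀ j, ∑ i, (1 - A) i j = 1)) ∧
      ∀ i j, (G.Adj i j ∨ i = j) →
        1 / (2 * ((n : ℝ) + (abar ^ 2)⁻¹)) ≤ (1 - A) i j) := by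
  classical
  have habar0 : (0:ℝ) < abar := lt_of_lt_of_le one_pos habar
  have hn1 : (1:ℝ) ≤ (n:ℝ) := by exact_mod_cast Nat.one_le_of_lt hn
  have hD : (0:ℝ) < (n : ℝ) * abar ^ 2 + 1 := by positivity
  have hζpos : 0 < ζ := by rw [hζ]; positivity
  -- the weight function
  set w : Fin n → Fin n → ℝ :=
    fun i j => if G.Adj i j then ζ * (a i j : ℝ) * (a j i : ℝ) else 0 with hw
  have hwsymm : ∀ i j, w i j = w j i := by
    intro i j
    by_cases h : G.Adj i j
    · simp only [hw, if_pos h, if_pos h.symm]; ring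
    · simp only [hw, if_neg h, if_neg (fun h' : G.Adj j i => h h'.symm)]
  have hwnonneg : ∀ i j, 0 ≤ w i j := by
    intro i j
    simp only [hw]
    split
    · positivity
    · exact le_refl 0
  have hwzero : ∀ i, w i i = 0 := by
    intro i; simp only [hw, if_neg (G.loopless.irrefl i)]
  have hwub : ∀ i j, w i j ≤ ζ * abar ^ 2 := by
    intro i j
    simp only [hw]
    split
    · rename_i h
      have h1 := ha_ub i j h
      have h2 := ha_ub j i h.symm
      have : (a i j : ℝ) * (a j i : ℝ) ≤ abar * abar :=
        mul_le_mul h1 h2 (Nat.cast_nonneg _) (le_of_lt habar0)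
      calc ζ * (a i j : ℝ) * (a j i : ℝ) = ζ * ((a i j : ℝ) * (a j i : ℝ)) := by ring
        _ ≤ ζ * (abar * abar) := by nlinarith
        _ = ζ * abar ^ 2 := by ring
    · positivity
  have hAw : ∀ i j, A i j = (if i = j then ∑ k, w i k else 0) - w i j := by
    intro i j
    by_cases hij : i = j
    · subst hij
      rw [hA_diag i, if_pos rfl, hwzero, sub_zero]
    · rw [if_neg hij, zero_sub]
      by_cases h : G.Adj i j
      · rw [hA_adj i j h]; simp only [hw, if_pos h]
      · rw [hA_nonadj i j hij h]; simp only [hw, if_neg h, neg_zero]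
  have hAdiag : ∀ i, A i i = ∑ k, w i k := by
    intro i; rw [hAw, if_pos rfl, hwzero, sub_zero]
  have hAoff : ∀ i j, i ≠ j → A i j = -(w i j) := by
    intro i j hij; rw [hAw, if_neg hij, zero_sub]
  -- symmetry of A
  have hAsymm_entry : ∀ i j, A i j = A j i := by
    intro i j
    by_cases hij : i = j
    · subst hij; rfl
    · rw [hAoff i j hij, hAoff j i (Ne.symm hij), hwsymm]
  have hAsymm : A.IsSymm := by
    ext i j; exact hAsymm_entry j i
  -- row sums of A are zero
  have hrow : ∀ i, ∑ j, A i j = 0 := by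
    intro i
    simp only [hAw]
    rw [Finset.sum_sub_distrib, Finset.sum_ite_eq, if_pos (Finset.mem_univ i), sub_self]
  -- A1 = 0
  have hA1 : A.mulVec (fun _ => 1) = 0 := by
    funext i
    simp only [Matrix.mulVec, dotProduct, mul_one, Pi.zero_apply]
    exact hrow i
  -- quadratic form
  have hquad : ∀ x : Fin n → ℝ,
      x ⬝ᵥ A.mulVec x = (1/2) * ∑ i, ∑ j, w i j * (x i - x j)^2 := by
    intro x
    have e1 : ∑ i, ∑ j, w i j * (x j)^2 = ∑ i, ∑ j, w i j * (x i)^2 := by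
      rw [Finset.sum_comm]
      exact Finset.sum_congr rfl fun j _ => Finset.sum_congr rfl fun i _ => by rw [hwsymm]
    have e2 : ∀ i j, w i j * (x i - x j)^2
        = w i j * (x i)^2 + w i j * (x j)^2 - 2 * (w i j * x i * x j) := by
      intro i j; ring
    have lhs : x ⬝ᵥ A.mulVec x
        = ∑ i, (∑ k, w i k) * (x i)^2 - ∑ i, ∑ j, w i j * x i * x j := by
      simp only [Matrix.mulVec, dotProduct, Finset.mul_sum, hAw]
      rw [← Finset.sum_sub_distrib]
      refine Finset.sum_congr rfl fun i _ => ?_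
      have : ∑ j, x i * (((if i = j then ∑ k, w i k else 0) - w i j) * x j)
          = ∑ j, ((if i = j then (∑ k, w i k) * x i * x j else 0) - w i j * x i * x j) := by
        refine Finset.sum_congr rfl fun j _ => ?_
        by_cases hij : i = j
        · rw [if_pos hij, if_pos hij]; ring
        · rw [if_neg hij, if_neg hij]; ring
      rw [this, Finset.sum_sub_distrib, Finset.sum_ite_eq, if_pos (Finset.mem_univ i)]
      congr 1
      ring
    rw [lhs]
    simp only [e2, Finset.sum_sub_distrib, Finset.sum_add_distrib]
    rw [e1]
    have e3 : ∑ i, (∑ k, w i k) * (x i)^2 = ∑ i, ∑ j, w i j * (x i)^2 := by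
      refine Finset.sum_congr rfl fun i _ => ?_
      rw [Finset.sum_mul]
    rw [e3]
    have e4 : ∑ i, ∑ j, 2 * (w i j * x i * x j) = 2 * ∑ i, ∑ j, w i j * x i * x j := by
      rw [Finset.mul_sum]
      exact Finset.sum_congr rfl fun i _ => by rw [Finset.mul_sum]
    rw [e4]
    ring
  have hquad_nonneg : ∀ x : Fin n → ℝ, 0 ≤ x ⬝ᵥ A.mulVec x := by
    intro x
    rw [hquad]
    have : 0 ≤ ∑ i, ∑ j, w i j * (x i - x j)^2 :=
      Finset.sum_nonneg fun i _ => Finset.sum_nonneg fun j _ => by positivity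
    linarith
  have hPSD : A.PosSemidef := by
    refine Matrix.PosSemidef.of_dotProduct_mulVec_nonneg ?_ fun x => by simpa using hquad_nonneg x
    exact hAsymm
  -- part (b)
  have hdiag_le : ∀ i, A i i ≤ ((n : ℝ) - 1) * abar ^ 2 / ((n : ℝ) * abar ^ 2 + 1) := by
    intro i
    rw [hAdiag]
    have h0 : ∑ k, w i k = ∑ k ∈ Finset.univ.erase i, w i k := by
      rw [Finset.sum_erase _ (hwzero i)]
    rw [h0]
    have h1 : ∑ k ∈ Finset.univ.erase i, w i k
        ≤ (Finset.univ.erase i).card • (ζ * abar ^ 2) :=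
      Finset.sum_le_card_nsmul _ _ _ (fun k _ => hwub i k)
    have hcard : ((Finset.univ.erase i).card : ℝ) = (n : ℝ) - 1 := by
      rw [Finset.card_erase_of_mem (Finset.mem_univ i), Finset.card_univ, Fintype.card_fin]
      have : 1 ≤ n := Nat.one_le_of_lt hn
      push_cast [Nat.cast_sub this]
      ring
    rw [nsmul_eq_mul, hcard] at h1
    calc ∑ k ∈ Finset.univ.erase i, w i k ≤ ((n : ℝ) - 1) * (ζ * abar ^ 2) := h1
      _ = ((n : ℝ) - 1) * abar ^ 2 / ((n : ℝ) * abar ^ 2 + 1) := by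
          rw [hζ]; field_simp
  have hoff_le : ∀ i j, i ≠ j → |A i j| ≤ abar ^ 2 / ((n : ℝ) * abar ^ 2 + 1) := by
    intro i j hij
    rw [hAoff i j hij, abs_neg, abs_of_nonneg (hwnonneg i j)]
    calc w i j ≤ ζ * abar ^ 2 := hwub i j
      _ = abar ^ 2 / ((n : ℝ) * abar ^ 2 + 1) := by rw [hζ]; field_simp
  have hdiag_lt_one : ∀ i, A i i < 1 := by
    intro i
    refine lt_of_le_of_lt (hdiag_le i) ?_
    rw [div_lt_one hD]
    nlinarith [sq_nonneg abar]
  -- eigenvalues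
  have heig : ∀ (c : ℝ) (v : Fin n → ℝ), v ≠ 0 → A.mulVec v = c • v → 0 ≤ c ∧ c < 2 := by
    intro c v hv hev
    have hvsq : 0 < ∑ i, (v i)^2 := by
      have h1 : ∃ i, v i ≠ 0 := by
        by_contra hcon
        push_neg at hcon
        exact hv (funext fun i => hcon i)
      obtain ⟨i, hi⟩ := h1
      have : 0 < (v i)^2 := by positivity
      exact lt_of_lt_of_le this (Finset.single_le_sum (fun j _ => sq_nonneg (v j))
        (Finset.mem_univ i))
    constructor
    · have h1 : v ⬝ᵥ A.mulVec v = c * ∑ i, (v i)^2 := by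
        rw [hev]
        simp only [dotProduct, Pi.smul_apply, smul_eq_mul, Finset.mul_sum]
        exact Finset.sum_congr rfl fun i _ => by ring
      have h2 := hquad_nonneg v
      rw [h1] at h2
      by_contra hc
      push_neg at hc
      nlinarith
    · -- pick index with max |v i|
      obtain ⟨i, _, hmax⟩ := Finset.exists_max_image Finset.univ (fun i => |v i|)
        ⟨⟨0, lt_of_lt_of_le two_pos hn⟩, Finset.mem_univ _⟩
      have hvi : 0 < |v i| := by
        rcases (Function.ne_iff).mp hv with ⟨j, hj⟩
        have h1 : 0 < |v j| := abs_pos.mpr (by simpa using hj)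
        exact lt_of_lt_of_le h1 (hmax j (Finset.mem_univ j))
      have hcvi : c * v i = ∑ j, A i j * v j := by
        have := congrFun hev i
        simp only [Matrix.mulVec, dotProduct, Pi.smul_apply, smul_eq_mul] at this
        rw [← this]
      have habs : |c| * |v i| ≤ ∑ j, |A i j| * |v i| := by
        rw [← abs_mul, hcvi]
        calc |∑ j, A i j * v j| ≤ ∑ j, |A i j * v j| := Finset.abs_sum_le_sum_abs _ _
          _ = ∑ j, |A i j| * |v j| := Finset.sum_congr rfl fun j _ => abs_mul _ _
          _ ≤ ∑ j, |A i j| * |v i| := Finset.sum_le_sum fun j _ =>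
              mul_le_mul_of_nonneg_left (hmax j (Finset.mem_univ j)) (abs_nonneg _)
      have hsumabs : ∑ j, |A i j| = 2 * A i i := by
        have : ∀ j, |A i j| = (if i = j then ∑ k, w i k else 0) + w i j := by
          intro j
          by_cases hij : i = j
          · subst hij
            rw [if_pos rfl, hwzero, add_zero, hAdiag,
              abs_of_nonneg (Finset.sum_nonneg fun k _ => hwnonneg i k)]
          · rw [if_neg hij, zero_add, hAoff i j hij, abs_neg,
              abs_of_nonneg (hwnonneg i j)]
        simp only [this]
        rw [Finset.sum_add_distrib, Finset.sum_ite_eq, if_pos (Finset.mem_univ i),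
          hAdiag]
        ring
      rw [← Finset.sum_mul, hsumabs] at habs
      have hAii : A i i < 1 := hdiag_lt_one i
      have : |c| < 2 := by
        by_contra hcon
        push_neg at hcon
        nlinarith
      calc c ≤ |c| := le_abs_self c
        _ < 2 := this
  -- properties of P = 1 - A
  have hP_entry : ∀ i j, (1 - A) i j = (if i = j then 1 else 0) - A i j := by
    intro i j
    simp [Matrix.sub_apply, Matrix.one_apply]
  have hPsymm_entry : ∀ i j, (1 - A) i j = (1 - A) j i := by
    intro i j
    rw [hP_entry, hP_entry, hAsymm_entry i j]
    by_cases h : i = j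
    · subst h; rfl
    · rw [if_neg h, if_neg (Ne.symm h)]
  have hPsymm : (1 - A).IsSymm := by
    ext i j
    simp only [Matrix.transpose_apply]
    exact hPsymm_entry j i
  have hPnonneg : ∀ i j, 0 ≤ (1 - A) i j := by
    intro i j
    rw [hP_entry]
    by_cases hij : i = j
    · subst hij
      rw [if_pos rfl]
      linarith [hdiag_lt_one i]
    · rw [if_neg hij, hAoff i j hij]
      have := hwnonneg i j
      linarith
  have hProw : ∀ i, ∑ j, (1 - A) i j = 1 := by
    intro i
    simp only [hP_entry]
    rw [Finset.sum_sub_distrib, hrow, Finset.sum_ite_eq, if_pos (Finset.mem_univ i),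
      sub_zero]
  have hPcol : ∀ j, ∑ i, (1 - A) i j = 1 := by
    intro j
    rw [Finset.sum_congr rfl fun i _ => hPsymm_entry i j]
    exact hProw j
  -- lower bound
  have hbound_eq : 1 / (2 * ((n : ℝ) + (abar ^ 2)⁻¹)) = abar ^ 2 / (2 * ((n : ℝ) * abar ^ 2 + 1)) := by
    rw [div_eq_div_iff]
    · field_simp
    · have : (0:ℝ) < (abar ^2)⁻¹ := by positivity
      nlinarith
    · positivity
  have hPlb : ∀ i j, (G.Adj i j ∨ i = j) →
      1 / (2 * ((n : ℝ) + (abar ^ 2)⁻¹)) ≤ (1 - A) i j := by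
    intro i j hadj
    rw [hbound_eq]
    rcases hadj with hadj | heq
    · have hij : i ≠ j := G.ne_of_adj hadj
      rw [hP_entry, if_neg hij, hAoff i j hij]
      simp only [hw, if_pos hadj, zero_sub, neg_neg]
      have hlb1 := ha_lb i j hadj
      have hlb2 := ha_lb j i hadj.symm
      have hs2 : (0:ℝ) < Real.sqrt 2 := Real.sqrt_pos.mpr two_pos
      have hq : 0 ≤ abar / Real.sqrt 2 := by positivity
      have hprod : (abar / Real.sqrt 2) * (abar / Real.sqrt 2) ≤ (a i j : ℝ) * (a j i : ℝ) :=
        mul_le_mul hlb1 hlb2 hq (Nat.cast_nonneg _)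
      have hsq : (abar / Real.sqrt 2) * (abar / Real.sqrt 2) = abar ^ 2 / 2 := by
        rw [div_mul_div_comm, Real.mul_self_sqrt (by norm_num : (0:ℝ) ≤ 2)]
        ring
      rw [hsq] at hprod
      have key : ζ * (abar ^ 2 / 2) ≤ ζ * (a i j : ℝ) * (a j i : ℝ) := by
        calc ζ * (abar ^ 2 / 2) ≤ ζ * ((a i j : ℝ) * (a j i : ℝ)) :=
              mul_le_mul_of_nonneg_left hprod (le_of_lt hζpos)
          _ = ζ * (a i j : ℝ) * (a j i : ℝ) := by ring
      refine le_trans (le_of_eq ?_) key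
      rw [hζ]
      field_simp
    · subst heq
      rw [hP_entry, if_pos rfl]
      have h1 := hdiag_le i
      have key : abar ^ 2 / (2 * ((n : ℝ) * abar ^ 2 + 1))
          ≤ 1 - ((n : ℝ) - 1) * abar ^ 2 / ((n : ℝ) * abar ^ 2 + 1) := by
        rw [div_le_iff₀ (by positivity)]
        have h2 : ((n : ℝ) - 1) * abar ^ 2 / ((n : ℝ) * abar ^ 2 + 1) * ((n : ℝ) * abar ^ 2 + 1)
            = ((n : ℝ) - 1) * abar ^ 2 := by field_simp
        nlinarith [sq_nonneg abar, hD]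
      linarith
  exact ⟨⟨hAsymm, hPSD, hA1⟩, ⟨hdiag_le, hoff_le⟩, heig,
    ⟨⟨hPsymm, hPnonneg, hProw, hPcol⟩, hPlb⟩⟩
end

section
/- Let n ≥ 2 and let A ∈ ℝ^{n×n} be symmetric positive semidefinite with eigenvalues 0 = λ₁ ≤ λ₂ ≤ … ≤ λₙ and an orthonormal basis of eigenvectors u₁, …, uₙ with u₁ = 1ₙ/√n. Let α ∈ (0,1) satisfy |1 − λ_j| ≤ α for all j ≥ 2 and λ₂ ≥ 1 − α. Then for all μ > 0 and σ_γ, σ_η > 0: max_{1≤i≤n} Σ_{j=1}^n ( μ²(1 − λ_j)² / (σ_γ² + λ_j² σ_η²) ) · (u_jᵀ e_i)² ≤ μ²/(n σ_γ²) + (n−1) μ² α² / (σ_γ² + (1−α)² σ_η²), where e_i is the i-th standard basis vector. -/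
open MeasureTheory ProbabilityTheory Filter Matrix

/-- bound on the squared sensitivity of the Gaussian mechanism in the
proof of Theorem 1. -/
theorem sensitivity_bound {n : ℕ} (hn : 2 ≤ n)
    (A : Matrix (Fin n) (Fin n) ℝ) (hAsymm : A.IsSymm) (hApsd : A.PosSemidef)
    (lam : Fin n → ℝ) (u : Fin n → Fin n → ℝ) (hmono : Monotone lam)
    (hlam0 : lam ⟨0, by omega⟩ = 0)
    (horth : ∀ j k, dotProduct (u j) (u k) = if j = k then 1 else 0)
    (heig : ∀ j, A.mulVec (u j) = lam j • u j)
    (hu0 : u ⟨0, by omega⟩ = fun _ => (Real.sqrt (n : ℝ))⁻¹)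
    (α : ℝ) (hα : α ∈ Set.Ioo (0 : ℝ) 1)
    (hαbound : ∀ j : Fin n, j ≠ ⟨0, by omega⟩ → |1 - lam j| ≤ α)
    (hlam2 : 1 - α ≤ lam ⟨1, by omega⟩)
    (μ σγ ση : ℝ) (hμ : 0 < μ) (hσγ : 0 < σγ) (hση : 0 < ση) :
    ∀ i : Fin n,
      (∑ j, μ ^ 2 * (1 - lam j) ^ 2 / (σγ ^ 2 + lam j ^ 2 * ση ^ 2) * (u j i) ^ 2) ≤
        μ ^ 2 / ((n : ℝ) * σγ ^ 2) +
          ((n : ℝ) - 1) * μ ^ 2 * α ^ 2 / (σγ ^ 2 + (1 - α) ^ 2 * ση ^ 2) := by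
  intro i
  have hn0 : (0 : ℝ) < n := by positivity
  have hα0 := hα.1
  have hα1 := hα.2
  have h1α : (0 : ℝ) < 1 - α := by linarith
  have hden0 : (0 : ℝ) < σγ ^ 2 + (1 - α) ^ 2 * ση ^ 2 := by positivity
  set i0 : Fin n := ⟨0, by omega⟩ with hi0def
  set f : Fin n → ℝ := fun j =>
    μ ^ 2 * (1 - lam j) ^ 2 / (σγ ^ 2 + lam j ^ 2 * ση ^ 2) * (u j i) ^ 2 with hf
  have husq : ∀ j, (u j i) ^ 2 ≤ 1 := by
    intro j
    have h : ∑ k, u j k * u j k = 1 := by simpa [dotProduct] using horth j j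
    have hle : u j i * u j i ≤ ∑ k, u j k * u j k :=
      Finset.single_le_sum (fun k _ => mul_self_nonneg (u j k)) (Finset.mem_univ i)
    nlinarith [hle, h]
  -- bound each term for j ≠ i0
  have hterm : ∀ j ∈ Finset.univ.erase i0,
      f j ≤ μ ^ 2 * α ^ 2 / (σγ ^ 2 + (1 - α) ^ 2 * ση ^ 2) := by
    intro j hj
    have hjne : j ≠ i0 := Finset.ne_of_mem_erase hj
    have hiv : i0.val = 0 := rfl
    have hj1 : (⟨1, by omega⟩ : Fin n) ≤ j := by
      have : 1 ≤ j.val := by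
        by_contra h
        exact hjne (Fin.ext (by omega))
      exact this
    have hlamj : 1 - α ≤ lam j := le_trans hlam2 (hmono hj1)
    have habs := hαbound j hjne
    have hnum : (1 - lam j) ^ 2 ≤ α ^ 2 := by
      nlinarith [sq_abs (1 - lam j), abs_nonneg (1 - lam j)]
    have hsq : (1 - α) ^ 2 ≤ lam j ^ 2 := by nlinarith
    have hdenle : σγ ^ 2 + (1 - α) ^ 2 * ση ^ 2 ≤ σγ ^ 2 + lam j ^ 2 * ση ^ 2 := by
      nlinarith [sq_nonneg ση]
    have hfrac : μ ^ 2 * (1 - lam j) ^ 2 / (σγ ^ 2 + lam j ^ 2 * ση ^ 2) ≤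
        μ ^ 2 * α ^ 2 / (σγ ^ 2 + (1 - α) ^ 2 * ση ^ 2) :=
      div_le_div₀ (by positivity) (by nlinarith) hden0 hdenle
    calc f j ≤ μ ^ 2 * α ^ 2 / (σγ ^ 2 + (1 - α) ^ 2 * ση ^ 2) * 1 :=
          mul_le_mul hfrac (husq j) (sq_nonneg _) (by positivity)
      _ = μ ^ 2 * α ^ 2 / (σγ ^ 2 + (1 - α) ^ 2 * ση ^ 2) := mul_one _
  have hsplit : (∑ j, f j) = f i0 + ∑ j ∈ Finset.univ.erase i0, f j :=
    (Finset.add_sum_erase _ _ (Finset.mem_univ i0)).symm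
  have hf0 : f i0 = μ ^ 2 / ((n : ℝ) * σγ ^ 2) := by
    have hsqrt : (Real.sqrt (n : ℝ))⁻¹ ^ 2 = ((n : ℝ))⁻¹ := by
      rw [← Real.sqrt_inv]
      exact Real.sq_sqrt (by positivity)
    simp only [hf, hlam0, hu0, hsqrt]
    field_simp
    ring
  have hcard : (Finset.univ.erase i0).card = n - 1 := by
    rw [Finset.card_erase_of_mem (Finset.mem_univ i0), Finset.card_univ, Fintype.card_fin]
  have hsum2 : ∑ j ∈ Finset.univ.erase i0, f j ≤
      ((n : ℝ) - 1) * μ ^ 2 * α ^ 2 / (σγ ^ 2 + (1 - α) ^ 2 * ση ^ 2) := by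
    calc ∑ j ∈ Finset.univ.erase i0, f j
        ≤ (Finset.univ.erase i0).card • (μ ^ 2 * α ^ 2 / (σγ ^ 2 + (1 - α) ^ 2 * ση ^ 2)) :=
          Finset.sum_le_card_nsmul _ _ _ hterm
      _ = ((n : ℝ) - 1) * μ ^ 2 * α ^ 2 / (σγ ^ 2 + (1 - α) ^ 2 * ση ^ 2) := by
          rw [hcard, nsmul_eq_mul]
          have : ((n - 1 : ℕ) : ℝ) = (n : ℝ) - 1 := by
            have : (1 : ℕ) ≤ n := by omega
            push_cast [Nat.cast_sub this]
            ring
          rw [this]; ring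
  rw [hsplit, hf0]
  linarith
end

section
/- Let n ≥ 2 be an integer, α ∈ (0,1), and μ, c, g > 0. Set σ_γ = (1+g)μ/(√n · c) and let σ_η ≥ 0. Then the inequality 1/(n σ_γ²) + (n−1)α²/(σ_γ² + (1−α)² σ_η²) ≤ c²/μ² holds if and only if σ_η² ≥ ((n−1)α²/((1−α)² c²)) · [ (1+g)² μ²/((1+g)² − 1) − (1+g)² μ²/(n(n−1)α²) ]. -/
open MeasureTheory ProbabilityTheory Filter Matrix

/-- algebraic equivalence between the privacy condition (13) and the
noise-design condition (15), with `c` playing the role of `κ_ε⁻¹(δ)`. -/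
theorem privacy_noise_design_equiv (n : ℕ) (hn : 2 ≤ n) (α μ c g σγ ση : ℝ)
    (hα : α ∈ Set.Ioo (0 : ℝ) 1) (hμ : 0 < μ) (hc : 0 < c) (hg : 0 < g)
    (hσγ : σγ = (1 + g) * μ / (Real.sqrt (n : ℝ) * c)) (hση : 0 ≤ ση) :
    (1 / ((n : ℝ) * σγ ^ 2) +
        ((n : ℝ) - 1) * α ^ 2 / (σγ ^ 2 + (1 - α) ^ 2 * ση ^ 2) ≤ c ^ 2 / μ ^ 2) ↔
      ση ^ 2 ≥ ((n : ℝ) - 1) * α ^ 2 / ((1 - α) ^ 2 * c ^ 2) *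
        ((1 + g) ^ 2 * μ ^ 2 / ((1 + g) ^ 2 - 1) -
          (1 + g) ^ 2 * μ ^ 2 / ((n : ℝ) * ((n : ℝ) - 1) * α ^ 2)) := by

  obtain ⟨hα0, hα1⟩ := hα
  have hnpos : (0:ℝ) < n := by positivity
  have hn1 : (1:ℝ) < n := by exact_mod_cast Nat.lt_of_lt_of_le one_lt_two hn
  have h1α : (0:ℝ) < 1 - α := by linarith
  have hg1 : (1:ℝ) < (1+g)^2 := by nlinarith
  have hP : σγ ^ 2 = (1+g)^2 * μ^2 / ((n:ℝ) * c^2) := by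
    rw [hσγ]
    rw [div_pow, mul_pow, mul_pow, Real.sq_sqrt hnpos.le]
  have hPpos : 0 < σγ ^ 2 := by rw [hP]; positivity
  have hden : 0 < σγ^2 + (1-α)^2 * ση^2 := by positivity
  set K : ℝ := c^2/μ^2 - 1/((n:ℝ) * σγ^2) with hKdef
  have h1 : 1/((n:ℝ) * σγ^2) = c^2/((1+g)^2 * μ^2) := by
    rw [hP]; field_simp
  have hK2 : K = c^2 * ((1+g)^2 - 1) / ((1+g)^2 * μ^2) := by
    rw [hKdef, h1]; field_simp
  have hK : 0 < K := by
    rw [hK2]; have : (0:ℝ) < (1+g)^2 - 1 := by linarith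
    positivity
  have key : (1 / ((n : ℝ) * σγ ^ 2) +
        ((n : ℝ) - 1) * α ^ 2 / (σγ ^ 2 + (1 - α) ^ 2 * ση ^ 2) ≤ c ^ 2 / μ ^ 2) ↔
      ((n:ℝ)-1) * α^2 ≤ K * (σγ^2 + (1-α)^2 * ση^2) := by
    rw [← le_sub_iff_add_le', div_le_iff₀ hden, hKdef]
  rw [key, ge_iff_le]
  have hD : ((n : ℝ) - 1) * α ^ 2 / ((1 - α) ^ 2 * c ^ 2) *
        ((1 + g) ^ 2 * μ ^ 2 / ((1 + g) ^ 2 - 1) -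
          (1 + g) ^ 2 * μ ^ 2 / ((n : ℝ) * ((n : ℝ) - 1) * α ^ 2)) =
      (((n:ℝ)-1) * α^2 - K * σγ^2) / (K * (1-α)^2) := by
    rw [hK2, hP]
    have h2 : (0:ℝ) < (1+g)^2 - 1 := by linarith
    have h3 : (0:ℝ) < (n:ℝ) - 1 := by linarith
    field_simp
  rw [hD, div_le_iff₀ (by positivity)]
  constructor <;> intro h <;> nlinarith [h]
end
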